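/- Assume a + b < c. Then for all positive integers i, j satisfying a·i ≤ (b−a)·j and (b−a)·j ≤ (c−b)·i, both monomials z_1^i·z_3^j and z_2^j·z_4^i belong to J; moreover such a pair (i,j) of positive integers exists. -/
import Mathlib


open MvPolynomial

private lemma mem_mm_helper {K : Type*} [Field K]
    (mm Iid : Ideal (MvPolynomial (Fin 2) K))
    (hmm : mm = Ideal.span {(X 0 : MvPolynomial (Fin 2) K), X 1})
    (v : MvPolynomial (Fin 2) K) (hv : v ∈ Iid)
    (bb aa : ℕ) (hvv : v = X 0 ^ bb * X 1 ^ aa)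
    (g p q e f : ℕ) (hpq : 0 < p + q)
    (he : e = p + bb * g) (hf : f = q + aa * g) :
    (X 0 : MvPolynomial (Fin 2) K) ^ e * X 1 ^ f ∈ mm * Iid ^ g := by
  have hX0 : (X 0 : MvPolynomial (Fin 2) K) ∈ mm := by
    rw [hmm]; exact Ideal.subset_span (by simp)
  have hX1 : (X 1 : MvPolynomial (Fin 2) K) ∈ mm := by
    rw [hmm]; exact Ideal.subset_span (by simp)
  have hfac : (X 0 : MvPolynomial (Fin 2) K) ^ e * X 1 ^ f
      = (X 0 ^ p * X 1 ^ q) * v ^ g := by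
    rw [hvv, mul_pow, ← pow_mul, ← pow_mul, he, hf, pow_add, pow_add]; ring
  rw [hfac]
  refine Ideal.mul_mem_mul ?_ (Ideal.pow_mem_pow hv g)
  rcases Nat.eq_zero_or_pos p with hp | hp
  · have hq : 0 < q := by omega
    have h1 : (X 1 : MvPolynomial (Fin 2) K) ^ q = X 1 * X 1 ^ (q - 1) := by
      nth_rewrite 1 [show q = 1 + (q - 1) by omega]
      rw [pow_add, pow_one]
    have : (X 0 : MvPolynomial (Fin 2) K) ^ p * X 1 ^ q
        = X 1 * (X 0 ^ p * X 1 ^ (q - 1)) := by rw [h1]; ring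
    rw [this]
    exact Ideal.mul_mem_right _ _ hX1
  · have h0 : (X 0 : MvPolynomial (Fin 2) K) ^ p = X 0 * X 0 ^ (p - 1) := by
      nth_rewrite 1 [show p = 1 + (p - 1) by omega]
      rw [pow_add, pow_one]
    have : (X 0 : MvPolynomial (Fin 2) K) ^ p * X 1 ^ q
        = X 0 * (X 0 ^ (p - 1) * X 1 ^ q) := by rw [h0]; ring
    rw [this]
    exact Ideal.mul_mem_right _ _ hX0

theorem stmt_13 {K : Type*} [Field K] (a b c : ℕ)
    (ha : 0 < a) (hab : a < b) (hbc : b < c)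
    (hgcd : Nat.gcd a (Nat.gcd b c) = 1)
    (u : Fin 4 → MvPolynomial (Fin 2) K)
    (hu0 : u 0 = X 0 ^ c) (hu1 : u 1 = X 0 ^ b * X 1 ^ a)
    (hu2 : u 2 = X 0 ^ a * X 1 ^ b) (hu3 : u 3 = X 1 ^ c)
    (I mm : Ideal (MvPolynomial (Fin 2) K))
    (hI : I = Ideal.span {u 0, u 1, u 2, u 3})
    (hmm : mm = Ideal.span {(X 0 : MvPolynomial (Fin 2) K), X 1})
    (J : Ideal (MvPolynomial (Fin 4) K))
    (hJ : ∀ f : MvPolynomial (Fin 4) K,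
      f ∈ J ↔ ∀ d : ℕ, aeval u (homogeneousComponent d f) ∈ mm * I ^ d)
    (habc : a + b < c) :
    (∀ i j : ℕ, 0 < i → 0 < j → a * i ≤ (b - a) * j → (b - a) * j ≤ (c - b) * i →
      (X 0 : MvPolynomial (Fin 4) K) ^ i * X 2 ^ j ∈ J ∧
      (X 1 : MvPolynomial (Fin 4) K) ^ j * X 3 ^ i ∈ J) ∧
    (∃ i j : ℕ, 0 < i ∧ 0 < j ∧ a * i ≤ (b - a) * j ∧ (b - a) * j ≤ (c - b) * i) := by
  constructor
  · intro i j hi hj h1 h2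
    -- arithmetic preliminaries
    have haj : a * j ≤ b * j := Nat.mul_le_mul_right j hab.le
    have hbi : b * i ≤ c * i := Nat.mul_le_mul_right i hbc.le
    have hba : (b - a) * j + a * j = b * j := by
      rw [Nat.sub_mul, Nat.sub_add_cancel haj]
    have hcb : (c - b) * i + b * i = c * i := by
      rw [Nat.sub_mul, Nat.sub_add_cancel hbi]
    have h1' : a * i + a * j ≤ b * j := by
      calc a * i + a * j ≤ (b - a) * j + a * j := Nat.add_le_add_right h1 _
        _ = b * j := hba
    have h2' : b * i + b * j ≤ c * i + a * j := by
      calc b * i + b * j = (b - a) * j + a * j + b * i := by rw [hba]; ring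
        _ ≤ (c - b) * i + a * j + b * i := by
            exact Nat.add_le_add_right (Nat.add_le_add_right h2 _) _
        _ = (c - b) * i + b * i + a * j := by ring
        _ = c * i + a * j := by rw [hcb]
    have hstrict : a * i + b * i < c * i := by
      calc a * i + b * i = (a + b) * i := (Nat.add_mul a b i).symm
        _ < c * i := (Nat.mul_lt_mul_right hi).mpr habc
    have e1 : b * (i + j) = b * i + b * j := Nat.mul_add b i j
    have e2 : a * (i + j) = a * i + a * j := Nat.mul_add a i j
    obtain ⟨p, hp_eq⟩ : ∃ p, p + b * (i + j) = c * i + a * j :=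
      ⟨_, Nat.sub_add_cancel (by rw [e1]; linarith)⟩
    obtain ⟨q, hq_eq⟩ : ∃ q, q + a * (i + j) = b * j :=
      ⟨_, Nat.sub_add_cancel (by rw [e2]; linarith)⟩
    have hpq : 0 < p + q := by
      rw [e1] at hp_eq
      rw [e2] at hq_eq
      by_contra hcon
      push_neg at hcon
      have hp0 : p = 0 := by omega
      have hq0 : q = 0 := by omega
      rw [hp0, zero_add] at hp_eq
      rw [hq0, zero_add] at hq_eq
      linarith
    have hu1I : u 1 ∈ I := by
      rw [hI]; exact Ideal.subset_span (by simp)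
    have hu2I : u 2 ∈ I := by
      rw [hI]; exact Ideal.subset_span (by simp)
    constructor
    · rw [hJ]
      intro d
      have hh : IsHomogeneous ((X 0 : MvPolynomial (Fin 4) K) ^ i * X 2 ^ j) (i + j) :=
        (isHomogeneous_X_pow 0 i).mul (isHomogeneous_X_pow 2 j)
      rw [homogeneousComponent_of_mem ((mem_homogeneousSubmodule _ _).mpr hh),
        apply_ite (aeval u)]
      split_ifs with hd
      · subst hd
        have hcomp : (aeval u) ((X 0 : MvPolynomial (Fin 4) K) ^ i * X 2 ^ j)
            = (X 0 : MvPolynomial (Fin 2) K) ^ (c * i + a * j) * X 1 ^ (b * j) := by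
          simp only [map_mul, map_pow, aeval_X, hu0, hu2]
          rw [mul_pow, ← pow_mul, ← pow_mul, ← pow_mul, pow_add]
          ring
        rw [hcomp]
        exact mem_mm_helper mm I hmm (u 1) hu1I b a hu1 (i + j) p q _ _ hpq
          hp_eq.symm hq_eq.symm
      · rw [map_zero]; exact Ideal.zero_mem _
    · rw [hJ]
      intro d
      have hh : IsHomogeneous ((X 1 : MvPolynomial (Fin 4) K) ^ j * X 3 ^ i) (i + j) := by
        rw [Nat.add_comm i j]
        exact (isHomogeneous_X_pow 1 j).mul (isHomogeneous_X_pow 3 i)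
      rw [homogeneousComponent_of_mem ((mem_homogeneousSubmodule _ _).mpr hh),
        apply_ite (aeval u)]
      split_ifs with hd
      · subst hd
        have hcomp : (aeval u) ((X 1 : MvPolynomial (Fin 4) K) ^ j * X 3 ^ i)
            = (X 0 : MvPolynomial (Fin 2) K) ^ (b * j) * X 1 ^ (a * j + c * i) := by
          simp only [map_mul, map_pow, aeval_X, hu1, hu3]
          rw [mul_pow, ← pow_mul, ← pow_mul, ← pow_mul, pow_add]
          ring
        rw [hcomp]
        refine mem_mm_helper mm I hmm (u 2) hu2I a b hu2 (i + j) q p _ _ (by omega)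
          hq_eq.symm ?_
        rw [hp_eq]; ring
      · rw [map_zero]; exact Ideal.zero_mem _
  · refine ⟨b - a, a, by omega, ha, ?_, ?_⟩
    · exact le_of_eq (Nat.mul_comm a (b - a))
    · calc (b - a) * a ≤ (b - a) * (c - b) := Nat.mul_le_mul le_rfl (by omega)
        _ = (c - b) * (b - a) := Nat.mul_comm _ _
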